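/- Let v be a function assigning to every rank-1 orthogonal projection P on a finite-dimensional complex Hilbert space H of dimension n ≥ 2 a value v(P) ∈ {0,1}, such that for every orthonormal basis e₁,…,eₙ of H, exactly one of v(|e₁⟩⟨e₁|),…,v(|eₙ⟩⟨eₙ|) equals 1. Then: (a) if v(|φ⟩⟨φ|) = 1 and ψ ⊥ φ are unit vectors, then v(|ψ⟩⟨ψ|) = 0; and (b) if n ≥ 3 and v(|ψ₁⟩⟨ψ₁|) = v(|ψ₂⟩⟨ψ₂|) = 0 for orthonormal ψ₁, ψ₂, then v(|ψ⟩⟨ψ|) = 0 for every unit vector ψ in the span of ψ₁ and ψ₂. -/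

import Mathlib

open scoped InnerProductSpace

/-- The rank-1 projection `|v⟩⟨v|` onto the span of a unit vector `v`. -/
noncomputable def outerProj {H : Type*} [NormedAddCommGroup H] [InnerProductSpace ℂ H]
    (v : H) : H →L[ℂ] H :=
  (innerSL ℂ v).smulRight v

lemma pair_extend {H : Type*} [NormedAddCommGroup H] [InnerProductSpace ℂ H]
    [FiniteDimensional ℂ H] (hdim : 2 ≤ Module.finrank ℂ H)
    {φ ψ : H} (hφ : ‖φ‖ = 1) (hψ : ‖ψ‖ = 1) (horth : ⟪φ, ψ⟫_ℂ = 0) :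
    ∃ b : OrthonormalBasis (Fin (Module.finrank ℂ H)) ℂ H,
      b ⟨0, by omega⟩ = φ ∧ b ⟨1, by omega⟩ = ψ := by
  set n := Module.finrank ℂ H with hn
  set i0 : Fin n := ⟨0, by omega⟩
  set i1 : Fin n := ⟨1, by omega⟩
  have hne : i0 ≠ i1 := by simp [i0, i1, Fin.ext_iff]
  set f : Fin n → H := fun j => if j = i0 then φ else ψ with hf
  set s : Set (Fin n) := {i0, i1} with hs
  have horth' : Orthonormal ℂ (s.domRestrict f) := by
    rw [orthonormal_iff_ite]
    rintro ⟨i, hi⟩ ⟨j, hj⟩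
    simp only [hs, Set.mem_insert_iff, Set.mem_singleton_iff] at hi hj
    rcases hi with rfl | rfl <;> rcases hj with rfl | rfl <;>
      simp [f, hne, hne.symm, Subtype.ext_iff, inner_self_eq_norm_sq_to_K, hφ, hψ, horth,
        inner_eq_zero_symm.mp horth]
  obtain ⟨b, hb⟩ := horth'.exists_orthonormalBasis_extension_of_card_eq (by simp [hn]) 
  refine ⟨b, ?_, ?_⟩
  · have := hb i0 (by simp [s]); simpa [f] using this
  · have := hb i1 (by simp [s]); simpa [f, hne.symm] using this

theorem stmt15 {H : Type*} [NormedAddCommGroup H] [InnerProductSpace ℂ H]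
    [FiniteDimensional ℂ H] (hdim : 2 ≤ Module.finrank ℂ H)
    (v : (H →L[ℂ] H) → ℝ)
    (hv01 : ∀ ψ : H, ‖ψ‖ = 1 → v (outerProj ψ) = 0 ∨ v (outerProj ψ) = 1)
    (hbasis : ∀ b : OrthonormalBasis (Fin (Module.finrank ℂ H)) ℂ H,
      ∃! i, v (outerProj (b i)) = 1) :
    (∀ φ ψ : H, ‖φ‖ = 1 → ‖ψ‖ = 1 → ⟪φ, ψ⟫_ℂ = 0 →
      v (outerProj φ) = 1 → v (outerProj ψ) = 0) ∧
    (3 ≤ Module.finrank ℂ H →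
      ∀ ψ₁ ψ₂ : H, ‖ψ₁‖ = 1 → ‖ψ₂‖ = 1 → ⟪ψ₁, ψ₂⟫_ℂ = 0 →
      v (outerProj ψ₁) = 0 → v (outerProj ψ₂) = 0 →
      ∀ a b : ℂ, ‖a • ψ₁ + b • ψ₂‖ = 1 →
        v (outerProj (a • ψ₁ + b • ψ₂)) = 0) := by
  constructor
  · intro φ ψ hφ hψ horth hφ1
    obtain ⟨b, hb0, hb1⟩ := pair_extend hdim hφ hψ horth
    obtain ⟨i, hi1, hiu⟩ := hbasis b
    rcases hv01 ψ hψ with h | h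
    · exact h
    · exfalso
      have e0 : (⟨0, by omega⟩ : Fin (Module.finrank ℂ H)) = i :=
        hiu _ (show v (outerProj (b ⟨0, by omega⟩)) = 1 by rw [hb0]; exact hφ1)
      have e1 : (⟨1, by omega⟩ : Fin (Module.finrank ℂ H)) = i :=
        hiu _ (show v (outerProj (b ⟨1, by omega⟩)) = 1 by rw [hb1]; exact h)
      rw [← e0] at e1
      simp [Fin.ext_iff] at e1
  · intro h3 ψ₁ ψ₂ h1 h2 h12 hv1 hv2 a b hab
    set n := Module.finrank ℂ H with hn
    set i0 : Fin n := ⟨0, by omega⟩ with hi0'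
    set i1 : Fin n := ⟨1, by omega⟩ with hi1'
    have hne : i0 ≠ i1 := by simp [i0, i1, Fin.ext_iff]
    obtain ⟨c, hc0, hc1⟩ := pair_extend hdim h1 h2 h12
    obtain ⟨i, hi1, hiu⟩ := hbasis c
    have hi0ne : i ≠ i0 := by
      rintro rfl; rw [hc0] at hi1; rw [hv1] at hi1; norm_num at hi1
    have hi1ne : i ≠ i1 := by
      rintro rfl; rw [hc1] at hi1; rw [hv2] at hi1; norm_num at hi1
    set ψ : H := a • ψ₁ + b • ψ₂ with hψdef
    set ψ' : H := (starRingEnd ℂ b) • ψ₁ - (starRingEnd ℂ a) • ψ₂ with hψ'def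
    have h21 : ⟪ψ₂, ψ₁⟫_ℂ = 0 := inner_eq_zero_symm.mp h12
    have hnorm1 : (⟪ψ₁, ψ₁⟫_ℂ) = 1 := by
      rw [inner_self_eq_norm_sq_to_K, h1]; norm_num
    have hnorm2 : (⟪ψ₂, ψ₂⟫_ℂ) = 1 := by
      rw [inner_self_eq_norm_sq_to_K, h2]; norm_num
    have habs : starRingEnd ℂ a * a + starRingEnd ℂ b * b = 1 := by
      have : (⟪ψ, ψ⟫_ℂ) = 1 := by rw [inner_self_eq_norm_sq_to_K, hab]; norm_num
      rw [hψdef] at this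
      simp only [inner_add_left, inner_add_right, inner_smul_left, inner_smul_right,
        h12, h21, hnorm1, hnorm2, mul_zero, mul_one, add_zero, zero_add] at this
      linear_combination this
    have hinner_pp' : ⟪ψ, ψ'⟫_ℂ = 0 := by
      rw [hψdef, hψ'def]
      simp only [inner_sub_right, inner_add_left, inner_smul_left, inner_smul_right,
        h12, h21, hnorm1, hnorm2, mul_zero, mul_one, add_zero, zero_add]
      ring
    have hinner_p'p : ⟪ψ', ψ⟫_ℂ = 0 := inner_eq_zero_symm.mp hinner_pp'
    have hinner_p'p' : ⟪ψ', ψ'⟫_ℂ = 1 := by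
      rw [hψ'def]
      simp only [inner_sub_left, inner_sub_right, inner_smul_left, inner_smul_right,
        h12, h21, hnorm1, hnorm2, mul_zero, mul_one, add_zero, zero_add, sub_zero, zero_sub,
        RingHomCompTriple.comp_apply, RingHom.id_apply, starRingEnd_self_apply]
      linear_combination habs
    have hinner_pp : ⟪ψ, ψ⟫_ℂ = 1 := by rw [inner_self_eq_norm_sq_to_K, hab]; norm_num
    have hcite := orthonormal_iff_ite.mp c.orthonormal
    -- inner of c j with ψ and ψ' for j ∉ {i0, i1}
    have hcj : ∀ j : Fin n, j ≠ i0 → j ≠ i1 →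
        ⟪c j, ψ⟫_ℂ = 0 ∧ ⟪ψ, c j⟫_ℂ = 0 ∧ ⟪c j, ψ'⟫_ℂ = 0 ∧ ⟪ψ', c j⟫_ℂ = 0 := by
      intro j hj0 hj1
      have e1 : ⟪c j, ψ₁⟫_ℂ = 0 := by
        have := hcite j i0; rw [hc0] at this; simpa [hj0] using this
      have e2 : ⟪c j, ψ₂⟫_ℂ = 0 := by
        have := hcite j i1; rw [hc1] at this; simpa [hj1] using this
      have e1' : ⟪ψ₁, c j⟫_ℂ = 0 := inner_eq_zero_symm.mp e1
      have e2' : ⟪ψ₂, c j⟫_ℂ = 0 := inner_eq_zero_symm.mp e2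
      refine ⟨?_, ?_, ?_, ?_⟩ <;>
        simp [hψdef, hψ'def, inner_add_left, inner_add_right, inner_sub_left, inner_sub_right,
          inner_smul_left, inner_smul_right, e1, e2, e1', e2']
    set f : Fin n → H := fun j => if j = i0 then ψ else if j = i1 then ψ' else c j with hfdef
    have hf0 : f i0 = ψ := by simp [hfdef]
    have hf1 : f i1 = ψ' := by simp [hfdef, hne.symm]
    have hfj : ∀ j, j ≠ i0 → j ≠ i1 → f j = c j := by
      intro j hj0 hj1; simp [hfdef, hj0, hj1]
    have horthf : Orthonormal ℂ ((Set.univ : Set (Fin n)).domRestrict f) := by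
      rw [orthonormal_iff_ite]
      rintro ⟨j, -⟩ ⟨k, -⟩
      simp only [Set.domRestrict_apply, Subtype.mk.injEq]
      by_cases hj0 : j = i0
      · subst hj0
        by_cases hk0 : k = i0
        · subst hk0; rw [hf0, if_pos rfl, hinner_pp]
        · rw [hf0, if_neg (fun h => hk0 h.symm)]
          by_cases hk1 : k = i1
          · subst hk1; rw [hf1, hinner_pp']
          · rw [hfj k hk0 hk1]; exact (hcj k hk0 hk1).2.1
      · by_cases hj1 : j = i1
        · subst hj1
          by_cases hk0 : k = i0
          · subst hk0; rw [hf1, hf0, if_neg (fun h => hne h.symm), hinner_p'p]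
          · by_cases hk1 : k = i1
            · subst hk1; rw [hf1, if_pos rfl, hinner_p'p']
            · rw [hf1, hfj k hk0 hk1, if_neg (fun h => hk1 h.symm)]
              exact (hcj k hk0 hk1).2.2.2
        · by_cases hk0 : k = i0
          · subst hk0; rw [hfj j hj0 hj1, hf0, if_neg hj0]; exact (hcj j hj0 hj1).1
          · by_cases hk1 : k = i1
            · subst hk1; rw [hfj j hj0 hj1, hf1, if_neg hj1]; exact (hcj j hj0 hj1).2.2.1
            · rw [hfj j hj0 hj1, hfj k hk0 hk1]; exact hcite j k
    obtain ⟨d, hd⟩ := horthf.exists_orthonormalBasis_extension_of_card_eq (by simp [hn])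
    obtain ⟨i', hi'1, hi'u⟩ := hbasis d
    have hdc : d i = c i := by
      have := hd i (Set.mem_univ i); rw [this]; simp [hfdef, hi0ne, hi1ne]
    have hii' : i = i' := hi'u _ (show v (outerProj (d i)) = 1 by rw [hdc]; exact hi1)
    rcases hv01 ψ hab with h | h
    · exact h
    · exfalso
      have hd0 : d i0 = ψ := by
        have := hd i0 (Set.mem_univ i0); rw [this]; simp [hfdef]
      have : i0 = i' := hi'u _ (show v (outerProj (d i0)) = 1 by rw [hd0]; exact h)
      rw [← hii'] at this
      exact hi0ne this.symm
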